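/- arXiv:1010.2984 — 3 statements merged into one kernel-verified Lean document; each statement's English description precedes it below -/
import Mathlib

section
/- Consider the system dn¹¹/dt = r̄·n¹¹n¹²/(n¹¹+n¹²) − d·n¹¹, dn¹²/dt = r̄·n¹¹n¹²/(n¹¹+n¹²) − d·n¹² on (0,∞)² with r̄ < 2d. Then lim_{t→∞} n¹¹(t) = lim_{t→∞} n¹²(t) = 0. -/
open Real Filter

theorem stmt7 (r d : ℝ) (hr : 0 < r) (hd : 0 < d) (hsub : r < 2 * d) (n11 n12 : ℝ → ℝ)
    (hpos1 : ∀ t, 0 < n11 t) (hpos2 : ∀ t, 0 < n12 t)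
    (hode1 : ∀ t, HasDerivAt n11 (r * n11 t * n12 t / (n11 t + n12 t) - d * n11 t) t)
    (hode2 : ∀ t, HasDerivAt n12 (r * n11 t * n12 t / (n11 t + n12 t) - d * n12 t) t) :
    Tendsto n11 atTop (nhds 0) ∧ Tendsto n12 atTop (nhds 0) := by
  set c : ℝ := r / 2 - d with hc
  have hcneg : c < 0 := by rw [hc]; linarith
  set S : ℝ → ℝ := fun t => n11 t + n12 t with hS
  have hSpos : ∀ t, 0 < S t := fun t => add_pos (hpos1 t) (hpos2 t)
  have hSderiv : ∀ t, HasDerivAt S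
      (2 * (r * n11 t * n12 t / (n11 t + n12 t)) - d * S t) t := by
    intro t
    have h := (hode1 t).add (hode2 t)
    refine h.congr_deriv ?_
    simp only [hS]; ring
  -- key differential inequality: S' ≤ c * S
  have hkey : ∀ t, 2 * (r * n11 t * n12 t / (n11 t + n12 t)) - d * S t ≤ c * S t := by
    intro t
    have ha := hpos1 t
    have hb := hpos2 t
    have hab : 0 < n11 t + n12 t := add_pos ha hb
    have h4 : r * n11 t * n12 t / (n11 t + n12 t) ≤ r * (n11 t + n12 t) / 4 := by
      rw [div_le_div_iff₀ hab (by norm_num)]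
      nlinarith [sq_nonneg (n11 t - n12 t)]
    simp only [hS, hc]
    nlinarith
  set g : ℝ → ℝ := fun t => S t * Real.exp (-c * t) with hg
  have hgderiv : ∀ t, HasDerivAt g
      ((2 * (r * n11 t * n12 t / (n11 t + n12 t)) - d * S t) * Real.exp (-c * t)
        + S t * (Real.exp (-c * t) * (-c))) t := by
    intro t
    have he : HasDerivAt (fun t => Real.exp (-c * t)) (Real.exp (-c * t) * (-c)) t := by
      simpa using (((hasDerivAt_id t).const_mul (-c)).exp)
    exact (hSderiv t).mul he
  have hgdiff : Differentiable ℝ g := fun t => (hgderiv t).differentiableAt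
  have hganti : Antitone g := by
    apply antitone_of_deriv_nonpos hgdiff
    intro t
    rw [(hgderiv t).deriv]
    have hexp : 0 < Real.exp (-c * t) := Real.exp_pos _
    have := hkey t
    nlinarith
  -- S t ≤ S 0 * exp (c * t) for all t ≥ 0
  have hbound : ∀ t, 0 ≤ t → S t ≤ S 0 * Real.exp (c * t) := by
    intro t ht
    have h1 : g t ≤ g 0 := hganti ht
    have h2 : g 0 = S 0 := by simp [hg]
    have hexp : 0 < Real.exp (c * t) := Real.exp_pos _
    have h3 : S t = g t * Real.exp (c * t) := by
      simp only [hg]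
      rw [mul_assoc, ← Real.exp_add]
      simp
    rw [h3]
    have := mul_le_mul_of_nonneg_right h1 hexp.le
    rw [h2] at this
    exact this
  -- bound tends to 0
  have hbt : Tendsto (fun t => S 0 * Real.exp (c * t)) atTop (nhds 0) := by
    have h1 : Tendsto (fun t : ℝ => c * t) atTop atBot :=
      Tendsto.const_mul_atTop_of_neg hcneg tendsto_id
    have h2 : Tendsto (fun t => Real.exp (c * t)) atTop (nhds 0) :=
      Real.tendsto_exp_atBot.comp h1
    simpa using h2.const_mul (S 0)
  have hmain : ∀ f : ℝ → ℝ, (∀ t, 0 < f t) → (∀ t, f t ≤ S t) →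
      Tendsto f atTop (nhds 0) := by
    intro f hfpos hfle
    apply tendsto_of_tendsto_of_tendsto_of_le_of_le' tendsto_const_nhds hbt
    · exact Eventually.of_forall fun t => (hfpos t).le
    · filter_upwards [eventually_ge_atTop (0 : ℝ)] with t ht
      exact (hfle t).trans (hbound t ht)
  exact ⟨hmain n11 hpos1 (fun t => le_add_of_nonneg_right (hpos2 t).le),
    hmain n12 hpos2 (fun t => le_add_of_nonneg_left (hpos1 t).le)⟩
end

section
/- Consider the system dn¹¹/dt = r̄·n¹¹n¹²/(n¹¹+n¹²) − d·n¹¹, dn¹²/dt = r̄·n¹¹n¹²/(n¹¹+n¹²) − d·n¹² on (0,∞)² with r̄ > 2d and initial condition in (0,∞)². Then both n¹¹(t) → +∞ and n¹²(t) → +∞ as t → ∞. -/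
open Real Filter

theorem stmt8 (r d : ℝ) (hr : 0 < r) (hd : 0 < d) (hsup : 2 * d < r) (n11 n12 : ℝ → ℝ)
    (hpos1 : ∀ t, 0 < n11 t) (hpos2 : ∀ t, 0 < n12 t)
    (hode1 : ∀ t, HasDerivAt n11 (r * n11 t * n12 t / (n11 t + n12 t) - d * n11 t) t)
    (hode2 : ∀ t, HasDerivAt n12 (r * n11 t * n12 t / (n11 t + n12 t) - d * n12 t) t) :
    Tendsto n11 atTop atTop ∧ Tendsto n12 atTop atTop := by
  have hexp : ∀ (a t : ℝ), HasDerivAt (fun t => Real.exp (a * t)) (a * Real.exp (a * t)) t := by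
    intro a t
    have h := ((hasDerivAt_id t).const_mul a).exp
    simp only [mul_one, id_eq] at h
    rw [mul_comm]
    exact h
  set ε : ℝ := r / 2 - d with hεdef
  have hε : 0 < ε := by simp only [hεdef]; linarith
  have hdε : d + ε = r / 2 := by simp only [hεdef]; ring
  set S : ℝ → ℝ := fun t => n11 t + n12 t with hSdef
  set D : ℝ → ℝ := fun t => n11 t - n12 t with hDdef
  have hSpos : ∀ t, 0 < S t := fun t => by
    have := hpos1 t; have := hpos2 t; simp only [hSdef]; linarith
  have hS : ∀ t, HasDerivAt S
      ((r * n11 t * n12 t / (n11 t + n12 t) - d * n11 t) +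
       (r * n11 t * n12 t / (n11 t + n12 t) - d * n12 t)) t :=
    fun t => (hode1 t).add (hode2 t)
  have hD : ∀ t, HasDerivAt D (-d * D t) t := by
    intro t
    have h := (hode1 t).sub (hode2 t)
    exact h.congr_deriv (by simp only [hDdef]; ring)
  -- D t = D 0 * exp (-(d*t))
  have hg : ∀ t, HasDerivAt (fun t => Real.exp (d * t) * D t) 0 t := by
    intro t
    have h2 := (hexp d t).mul (hD t)
    exact h2.congr_deriv (by ring)
  have hDeq : ∀ t, D t = D 0 * Real.exp (-d * t) := by
    intro t
    have hc := is_const_of_deriv_eq_zero (f := fun t => Real.exp (d * t) * D t)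
      (fun x => (hg x).differentiableAt) (fun x => (hg x).deriv) t 0
    simp only [mul_zero, Real.exp_zero, one_mul] at hc
    have h3 : D t = Real.exp (-d * t) * (Real.exp (d * t) * D t) := by
      rw [← mul_assoc, ← Real.exp_add]
      simp
    rw [h3, hc]; ring
  have hDabs : ∀ t, |D t| = |D 0| * Real.exp (-d * t) := by
    intro t
    rw [hDeq t, abs_mul, abs_of_pos (Real.exp_pos _)]
  have hDleS : ∀ t, |D t| ≤ S t := by
    intro t
    have := hpos1 t; have := hpos2 t
    simp only [hDdef, hSdef]
    rw [abs_le]; constructor <;> linarith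
  -- F t := exp(-ε*t) * S t - |D 0| * exp(-(d+ε)*t) is monotone
  set F : ℝ → ℝ := fun t => Real.exp (-ε * t) * S t - |D 0| * Real.exp (-(d + ε) * t)
    with hFdef
  have hF : ∀ t, HasDerivAt F
      ((-ε * Real.exp (-ε * t)) * S t + Real.exp (-ε * t) *
        ((r * n11 t * n12 t / (n11 t + n12 t) - d * n11 t) +
         (r * n11 t * n12 t / (n11 t + n12 t) - d * n12 t))
       - |D 0| * (-(d + ε) * Real.exp (-(d + ε) * t))) t := by
    intro t
    exact ((hexp (-ε) t).mul (hS t)).sub ((hexp (-(d + ε)) t).const_mul (|D 0|))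
  have hkey : ∀ t, -(r / 2 * |D t|) ≤
      (r * n11 t * n12 t / (n11 t + n12 t) - d * n11 t) +
      (r * n11 t * n12 t / (n11 t + n12 t) - d * n12 t) - ε * S t := by
    intro t
    have ha := hpos1 t; have hb := hpos2 t
    have hab : 0 < n11 t + n12 t := by linarith
    have heq : (r * n11 t * n12 t / (n11 t + n12 t) - d * n11 t) +
        (r * n11 t * n12 t / (n11 t + n12 t) - d * n12 t) - ε * S t
        = -(r * (n11 t - n12 t) ^ 2 / (2 * (n11 t + n12 t))) := by
      simp only [hSdef, hεdef]
      field_simp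
      ring
    rw [heq, neg_le_neg_iff, div_le_iff₀ (by linarith)]
    have h1 : |D t| ≤ n11 t + n12 t := hDleS t
    have h2 : (n11 t - n12 t) ^ 2 = |D t| * |D t| := by
      simp only [hDdef]
      rw [← sq_abs]; ring
    rw [h2]
    have h3 : 0 ≤ |D t| := abs_nonneg _
    nlinarith [mul_le_mul_of_nonneg_left h1 (mul_nonneg hr.le h3)]
  have hFmono : Monotone F := by
    apply monotone_of_deriv_nonneg (fun x => (hF x).differentiableAt)
    intro x
    rw [(hF x).deriv]
    set big := (r * n11 x * n12 x / (n11 x + n12 x) - d * n11 x) +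
      (r * n11 x * n12 x / (n11 x + n12 x) - d * n12 x) with hbig
    have hgoal_eq : (-ε * Real.exp (-ε * x)) * S x + Real.exp (-ε * x) * big
        - |D 0| * (-(d + ε) * Real.exp (-(d + ε) * x))
        = Real.exp (-ε * x) * (big - ε * S x) + (d + ε) * (|D 0| * Real.exp (-(d + ε) * x)) := by
      ring
    have h7 : (d + ε) * (|D 0| * Real.exp (-(d + ε) * x))
        = r / 2 * (|D 0| * Real.exp (-(d + ε) * x)) := by rw [hdε]
    rw [hgoal_eq, h7]
    have hep : (0:ℝ) < Real.exp (-ε * x) := Real.exp_pos _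
    have h1 : Real.exp (-ε * x) * (-(r / 2 * |D x|)) ≤ Real.exp (-ε * x) * (big - ε * S x) :=
      mul_le_mul_of_nonneg_left (hkey x) hep.le
    have h2 : Real.exp (-ε * x) * (-(r / 2 * |D x|))
        = -(r / 2 * (|D 0| * Real.exp (-(d + ε) * x))) := by
      have hee : Real.exp (-(d + ε) * x) = Real.exp (-ε * x) * Real.exp (-d * x) := by
        rw [← Real.exp_add]; ring_nf
      rw [hDabs x, hee]; ring
    rw [h2] at h1
    linarith
  -- conclude lower bound on S
  set c : ℝ := S 0 - |D 0| with hcdef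
  have hc : 0 < c := by
    have h1 := hpos1 0; have h2 := hpos2 0
    have : |n11 0 - n12 0| < n11 0 + n12 0 := by
      rw [abs_lt]; constructor <;> linarith
    simp only [hcdef, hSdef, hDdef]
    linarith
  have hSlb : ∀ t, 0 ≤ t → c * Real.exp (ε * t) ≤ S t := by
    intro t ht
    have h := hFmono ht
    have hF0 : c ≤ F 0 := le_of_eq (by simp [hFdef, hcdef])
    have hx : 0 ≤ |D 0| * Real.exp (-(d + ε) * t) := by positivity
    have h5 : c ≤ Real.exp (-ε * t) * S t := by
      have h4 := hF0.trans h
      simp only [hFdef] at h4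
      linarith
    have h6 := mul_le_mul_of_nonneg_right h5 (Real.exp_pos (ε * t)).le
    calc c * Real.exp (ε * t) ≤ Real.exp (-ε * t) * S t * Real.exp (ε * t) := h6
    _ = S t * (Real.exp (-ε * t) * Real.exp (ε * t)) := by ring
    _ = S t := by rw [← Real.exp_add]; simp
  -- lower bounds for n11 and n12
  have hmain : Tendsto (fun t => (c * Real.exp (ε * t) - |D 0|) / 2) atTop atTop := by
    apply Tendsto.atTop_div_const (by norm_num)
    apply tendsto_atTop_add_const_right
    apply Tendsto.const_mul_atTop hc
    exact Real.tendsto_exp_atTop.comp (tendsto_id.const_mul_atTop hε)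
  have hDb : ∀ t, 0 ≤ t → |D t| ≤ |D 0| := by
    intro t ht
    rw [hDabs t]
    have h1 : Real.exp (-d * t) ≤ 1 := Real.exp_le_one_iff.mpr (by nlinarith)
    nlinarith [abs_nonneg (D 0), Real.exp_pos (-d * t)]
  clear_value F c
  clear_value S D
  constructor
  · apply tendsto_atTop_mono' atTop _ hmain
    filter_upwards [eventually_ge_atTop (0:ℝ)] with t ht
    have h1 := hSlb t ht
    have h2 := hDb t ht
    have h3 : -(D t) ≤ |D t| := neg_le_abs _
    have he1 : S t + D t = 2 * n11 t := by simp only [hSdef, hDdef]; ring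
    linarith
  · apply tendsto_atTop_mono' atTop _ hmain
    filter_upwards [eventually_ge_atTop (0:ℝ)] with t ht
    have h1 := hSlb t ht
    have h2 := hDb t ht
    have h3 : D t ≤ |D t| := le_abs_self _
    have he1 : S t - D t = 2 * n12 t := by simp only [hSdef, hDdef]; ring
    linarith
end

section
/- Consider the ODE dn/dt = [(1−δ)s·r̄ + (1−s)·r̄·e^{αn}/(β+e^{αn}) − d]·n with r̄, d, α, β > 0, s, δ ∈ [0,1]. If r̄(1−δs) < d, then every solution started in (0,∞) converges to 0 as t → ∞. -/
open Real Filter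

theorem stmt10 (r d α β s δ : ℝ) (hr : 0 < r) (hd : 0 < d) (hα : 0 < α) (hβ : 0 < β)
    (hs : s ∈ Set.Icc (0 : ℝ) 1) (hδ : δ ∈ Set.Icc (0 : ℝ) 1)
    (hsub : r * (1 - δ * s) < d)
    (n : ℝ → ℝ) (hpos : ∀ t, 0 < n t)
    (hode : ∀ t, HasDerivAt n
      (((1 - δ) * s * r + (1 - s) * r * exp (α * n t) / (β + exp (α * n t)) - d) * n t) t) :
    Tendsto n atTop (nhds 0) := by
  obtain ⟨hs0, hs1⟩ := hs
  obtain ⟨hδ0, hδ1⟩ := hδ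
  set c : ℝ := d - r * (1 - δ * s) with hc
  have hcpos : 0 < c := by linarith
  -- the growth rate is at most -c
  have hrate : ∀ t, (1 - δ) * s * r + (1 - s) * r * exp (α * n t) / (β + exp (α * n t)) - d ≤ -c := by
    intro t
    have hex : 0 < exp (α * n t) := exp_pos _
    have hden : 0 < β + exp (α * n t) := by linarith
    have hfrac : exp (α * n t) / (β + exp (α * n t)) ≤ 1 := by
      rw [div_le_one hden]; linarith
    have h1 : (1 - s) * r * (exp (α * n t) / (β + exp (α * n t))) ≤ (1 - s) * r * 1 := by
      apply mul_le_mul_of_nonneg_left hfrac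
      have : 0 ≤ 1 - s := by linarith
      exact mul_nonneg this hr.le
    have h2 : (1 - s) * r * exp (α * n t) / (β + exp (α * n t))
        = (1 - s) * r * (exp (α * n t) / (β + exp (α * n t))) := by ring
    rw [h2]
    nlinarith
  -- auxiliary function g t = n t * exp (c * t)
  set g : ℝ → ℝ := fun t => n t * exp (c * t) with hg
  have hgderiv : ∀ t, HasDerivAt g
      ((((1 - δ) * s * r + (1 - s) * r * exp (α * n t) / (β + exp (α * n t)) - d) * n t)
        * exp (c * t) + n t * (exp (c * t) * c)) t := by
    intro t
    have h := (hode t).mul (((hasDerivAt_id t).const_mul c).exp)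
    simp only [id_eq, mul_one] at h
    exact h
  have hanti : Antitone g := by
    apply antitone_of_deriv_nonpos
    · exact fun t => (hgderiv t).differentiableAt
    · intro t
      rw [(hgderiv t).deriv]
      have hnt := hpos t
      have hex : 0 < exp (c * t) := exp_pos _
      have hrt := hrate t
      nlinarith [mul_le_mul_of_nonneg_right hrt (mul_pos hnt hex).le]
  -- hence n t ≤ n 0 * exp (-c * t) for t ≥ 0
  have hbound : ∀ t, 0 ≤ t → n t ≤ n 0 * exp (-(c * t)) := by
    intro t ht
    have h := hanti ht
    have : g t ≤ g 0 := h
    simp only [hg, mul_zero, exp_zero, mul_one] at this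
    have hex : 0 < exp (c * t) := exp_pos _
    rw [exp_neg, ← div_eq_mul_inv, le_div_iff₀ hex]
    exact this
  have htend : Tendsto (fun t => n 0 * exp (-(c * t))) atTop (nhds 0) := by
    have h1 : Tendsto (fun t : ℝ => c * t) atTop atTop :=
      Tendsto.const_mul_atTop hcpos tendsto_id
    have h2 : Tendsto (fun t : ℝ => exp (-(c * t))) atTop (nhds 0) :=
      Real.tendsto_exp_neg_atTop_nhds_zero.comp h1
    have := h2.const_mul (n 0)
    simpa using this
  apply tendsto_of_tendsto_of_tendsto_of_le_of_le' tendsto_const_nhds htend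
  · exact Eventually.of_forall fun t => (hpos t).le
  · filter_upwards [eventually_ge_atTop (0 : ℝ)] with t ht using hbound t ht
end
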